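/- Let x_n, x ∈ D([0,∞),ℝ) with x_n → x in Skorokhod's J₁-topology, and let y_n, y : [0,∞) → [0,∞) be non-decreasing with y(0) = 0, y_n(∞) = y(∞) = ∞, y strictly increasing, and y_n(u) → y(u) for every u in a dense subset D ⊂ [0,∞). Then for every t ≥ 0 such that x is continuous at y⁻¹(t), we have x_n(y_n⁻¹(t)) → x(y⁻¹(t)) as n → ∞, where y_n⁻¹ and y⁻¹ denote the right-continuous inverses. -/

import Mathlib

open Filter Set
open scoped NNReal Topology

/-- A function `[0,∞) → E` is càdlàg: right-continuous with left limits. -/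
def Cadlag {E : Type*} [TopologicalSpace E] (f : ℝ≥0 → E) : Prop :=
  ∀ t : ℝ≥0, ContinuousWithinAt f (Set.Ici t) t ∧
    ∃ l : E, Tendsto f (nhdsWithin t (Set.Iio t)) (𝓝 l)

/-- Convergence in Skorokhod's J₁-topology on `D([0,∞), E)`: for every `T > 0`
there are continuous strictly increasing time changes `λ_n` with `λ_n(0) = 0`,
`λ_n(t) → ∞`, such that `sup_{[0,T]} ‖x_n ∘ λ_n − x‖ → 0` and
`sup_{[0,T]} |λ_n − id| → 0`. -/
def J1Tendsto {E : Type*} [NormedAddCommGroup E] (x : ℕ → ℝ≥0 → E) (y : ℝ≥0 → E) : Prop :=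
  ∀ T : ℝ≥0, 0 < T → ∃ lam : ℕ → ℝ≥0 → ℝ≥0,
    (∀ n, Continuous (lam n) ∧ StrictMono (lam n) ∧ lam n 0 = 0 ∧
      Tendsto (lam n) atTop atTop) ∧
    (∀ ε : ℝ, 0 < ε → ∀ᶠ n in atTop, ∀ t ∈ Set.Icc (0 : ℝ≥0) T,
      ‖x n (lam n t) - y t‖ < ε ∧ |((lam n t : ℝ)) - (t : ℝ)| < ε)

/-- The right-continuous inverse `m⁻¹(t) := inf{u ≥ 0 : m(u) > t}`. -/
noncomputable def rcInv (m : ℝ≥0 → ℝ≥0) (t : ℝ≥0) : ℝ≥0 :=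
  sInf {u | m u > t}

/-- Auxiliary: the right-continuous inverses converge pointwise. -/
lemma rcInv_tendsto
    (y : ℕ → ℝ≥0 → ℝ≥0) (ylim : ℝ≥0 → ℝ≥0)
    (hymono : ∀ n, Monotone (y n))
    (hytop : ∀ n, Tendsto (y n) atTop atTop) (hylimtop : Tendsto ylim atTop atTop)
    (hystrict : StrictMono ylim)
    (D : Set ℝ≥0) (hD : Dense D)
    (hconv : ∀ u ∈ D, Tendsto (fun n => y n u) atTop (𝓝 (ylim u)))
    (t : ℝ≥0) :
    Tendsto (fun n => rcInv (y n) t) atTop (𝓝 (rcInv ylim t)) := by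
  set s := rcInv ylim t with hs
  have hSne : {u | ylim u > t}.Nonempty := (hylimtop.eventually_gt_atTop t).exists
  have hSnne : ∀ n, {u | y n u > t}.Nonempty := fun n =>
    ((hytop n).eventually_gt_atTop t).exists
  have hgt : ∀ u, s < u → t < ylim u := by
    intro u hu
    obtain ⟨v, hv, hvu⟩ := exists_lt_of_csInf_lt hSne hu
    exact lt_of_lt_of_le hv (hystrict.monotone hvu.le)
  have hle : ∀ u, u < s → ylim u ≤ t := by
    intro u hu
    by_contra h
    have hmem : u ∈ {u | ylim u > t} := lt_of_not_ge h
    have hsle : s ≤ u := csInf_le (OrderBot.bddBelow _) hmem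
    exact absurd hsle (not_le.2 hu)
  rw [tendsto_order]
  constructor
  · -- lower bound
    intro b hb
    obtain ⟨u', hu'D, hu'1, hu'2⟩ : ∃ u' ∈ D, b < u' ∧ u' < s := by
      obtain ⟨u', hu'D, hu'⟩ := hD.exists_mem_open isOpen_Ioo (nonempty_Ioo.2 hb)
      exact ⟨u', hu'D, hu'.1, hu'.2⟩
    -- ylim u' < t
    obtain ⟨w, hw1, hw2⟩ := exists_between hu'2
    have hylt : ylim u' < t := lt_of_lt_of_le (hystrict hw1) (hle w hw2)
    have hev : ∀ᶠ n in atTop, y n u' < t := (hconv u' hu'D).eventually (gt_mem_nhds hylt)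
    filter_upwards [hev] with n hn
    have : u' ≤ rcInv (y n) t := by
      apply le_csInf (hSnne n)
      intro v hv
      by_contra hvu
      exact absurd (lt_of_le_of_lt ((hymono n) (le_of_not_ge hvu)) hn) (not_lt.2 hv.le)
    exact lt_of_lt_of_le hu'1 this
  · -- upper bound
    intro b hb
    obtain ⟨u, huD, hu1, hu2⟩ : ∃ u ∈ D, s < u ∧ u < b := by
      obtain ⟨u, huD, hu⟩ := hD.exists_mem_open isOpen_Ioo (nonempty_Ioo.2 hb)
      exact ⟨u, huD, hu.1, hu.2⟩
    have hygt : t < ylim u := hgt u hu1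
    have hev : ∀ᶠ n in atTop, t < y n u := (hconv u huD).eventually (lt_mem_nhds hygt)
    filter_upwards [hev] with n hn
    exact lt_of_le_of_lt (csInf_le (OrderBot.bddBelow _) hn) hu2

/-- Auxiliary: J₁ convergence plus a continuity point gives convergence along
any sequence of times converging to that point. -/
lemma j1_comp_tendsto (x : ℕ → ℝ≥0 → ℝ) (xlim : ℝ≥0 → ℝ) (hJ1 : J1Tendsto x xlim)
    (s : ℝ≥0) (hcont : ContinuousAt xlim s)
    (u : ℕ → ℝ≥0) (hu : Tendsto u atTop (𝓝 s)) :
    Tendsto (fun n => x n (u n)) atTop (𝓝 (xlim s)) := by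
  rw [Metric.tendsto_nhds]
  intro ε hε
  obtain ⟨δ, hδpos, hδ⟩ := Metric.continuousAt_iff.1 hcont (ε/2) (by positivity)
  obtain ⟨lam, hlam, hev⟩ := hJ1 (s + 1) (by positivity)
  set ε₀ := min (δ/2) (min (1/4) (ε/2)) with hε₀
  have hε₀pos : 0 < ε₀ := lt_min (by positivity) (lt_min (by norm_num) (by positivity))
  have hε₀δ : ε₀ ≤ δ/2 := min_le_left _ _
  have hε₀q : ε₀ ≤ 1/4 := (min_le_right _ _).trans (min_le_left _ _)
  have hε₀ε : ε₀ ≤ ε/2 := (min_le_right _ _).trans (min_le_right _ _)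
  have H1 := hev ε₀ hε₀pos
  have H2 : ∀ᶠ n in atTop, dist (u n) s < min (δ/2) (1/4) :=
    hu (Metric.ball_mem_nhds s (lt_min (by positivity) (by norm_num)))
  filter_upwards [H1, H2] with n h1 h2
  obtain ⟨hcn, hmn, h0n, htn⟩ := hlam n
  have hud : |(u n : ℝ) - s| < min (δ/2) (1/4) := by rwa [NNReal.dist_eq] at h2
  -- find t_n with lam n t_n = u n
  obtain ⟨M, hM⟩ := (htn.eventually_ge_atTop (u n)).exists
  have hmem : u n ∈ Icc (lam n 0) (lam n M) := by rw [h0n]; exact ⟨zero_le, hM⟩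
  obtain ⟨tn, _, htneq⟩ := intermediate_value_Icc (zero_le : (0:ℝ≥0) ≤ M) hcn.continuousOn hmem
  -- t_n ≤ s + 1
  have hT := h1 (s + 1) ⟨zero_le, le_refl _⟩
  have hT2 : |((lam n (s+1) : ℝ)) - ((s+1 : ℝ≥0) : ℝ)| < ε₀ := hT.2
  have hcoe : ((s + 1 : ℝ≥0) : ℝ) = (s : ℝ) + 1 := by push_cast; ring
  have hlamT : (s : ℝ) + 3/4 < (lam n (s+1) : ℝ) := by
    rw [hcoe] at hT2
    have := abs_lt.1 hT2
    linarith [hε₀q]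
  have hun : (u n : ℝ) < (s : ℝ) + 1/4 := by
    have := abs_lt.1 hud
    have h14 : (u n : ℝ) - s < 1/4 := lt_of_lt_of_le this.2 (min_le_right _ _)
    linarith
  have htnlt : tn < s + 1 := by
    have : (lam n tn : ℝ) < (lam n (s+1) : ℝ) := by rw [htneq]; linarith
    exact hmn.lt_iff_lt.1 (NNReal.coe_lt_coe.1 this)
  have hA := h1 tn ⟨zero_le, htnlt.le⟩
  have hA1 : ‖x n (lam n tn) - xlim tn‖ < ε₀ := hA.1
  have hA2 : |(lam n tn : ℝ) - (tn : ℝ)| < ε₀ := hA.2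
  rw [htneq] at hA1 hA2
  -- t_n is δ-close to s
  have htns : dist tn s < δ := by
    rw [NNReal.dist_eq]
    have h1' := abs_lt.1 hA2
    have h2' := abs_lt.1 hud
    have h2'' : |(u n : ℝ) - s| < δ/2 := lt_of_lt_of_le hud (min_le_left _ _)
    have h2''' := abs_lt.1 h2''
    rw [abs_lt]
    constructor <;> linarith [hε₀δ]
  have hxd : dist (xlim tn) (xlim s) < ε/2 := hδ htns
  rw [Real.dist_eq] at hxd ⊢
  have htri : |x n (u n) - xlim s| ≤ |x n (u n) - xlim tn| + |xlim tn - xlim s| :=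
    abs_sub_le _ _ _
  have hnorm : |x n (u n) - xlim tn| < ε₀ := by simpa [Real.norm_eq_abs] using hA1
  linarith [hε₀ε]

/-- If `x_n → x` in the J₁-topology, `y_n, y` are non-decreasing
with `y 0 = 0`, `y_n(∞) = y(∞) = ∞`, `y` strictly increasing, and `y_n → y`
pointwise on a dense set, then `x_n(y_n⁻¹(t)) → x(y⁻¹(t))` at every `t ≥ 0` at
which `x` is continuous at `y⁻¹(t)`. -/
theorem stmt3
    (x : ℕ → ℝ≥0 → ℝ) (xlim : ℝ≥0 → ℝ)
    (hx : ∀ n, Cadlag (x n)) (hxlim : Cadlag xlim)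
    (hJ1 : J1Tendsto x xlim)
    (y : ℕ → ℝ≥0 → ℝ≥0) (ylim : ℝ≥0 → ℝ≥0)
    (hymono : ∀ n, Monotone (y n)) (hylimmono : Monotone ylim)
    (hy0 : ylim 0 = 0)
    (hytop : ∀ n, Tendsto (y n) atTop atTop) (hylimtop : Tendsto ylim atTop atTop)
    (hystrict : StrictMono ylim)
    (D : Set ℝ≥0) (hD : Dense D)
    (hconv : ∀ u ∈ D, Tendsto (fun n => y n u) atTop (𝓝 (ylim u)))
    (t : ℝ≥0) (hcont : ContinuousAt xlim (rcInv ylim t)) :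
    Tendsto (fun n => x n (rcInv (y n) t)) atTop (𝓝 (xlim (rcInv ylim t))) := by
  exact j1_comp_tendsto x xlim hJ1 (rcInv ylim t) hcont (fun n => rcInv (y n) t)
    (rcInv_tendsto y ylim hymono hytop hylimtop hystrict D hD hconv t)
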